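/- Let T be a self-adjoint contraction on H ⊗ H satisfying the braid relation on H^{⊗3}, and define P_2 = 1 + T, R_n = 1 + T_1 + T_1T_2 + ⋯ + T_1⋯T_{n-1}, P_{n+1} = (1 ⊗ P_n) R_{n+1}. Then for each k, ker(1 + T_k) ⊆ ker P_{n+1}, where T_k acts as T on the k-th and (k+1)-st tensor factors of H^{⊗(n+1)}. -/

import Mathlib

open scoped ComplexOrder

namespace Wick

/-- The operator `T_i = 1^{⊗(i-1)} ⊗ T ⊗ 1^{⊗(n-i-1)}` on `H^{⊗n}` (1-indexed, acting on
tensor factors `i` and `i+1`), where `H = ℂ^d` and `H^{⊗n}` is identified with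
functions `(Fin n → Fin d) → ℂ` via the basis of elementary tensors. -/
noncomputable def Ti (d n : ℕ) (T : Matrix (Fin d × Fin d) (Fin d × Fin d) ℂ) (i : ℕ) :
    Matrix (Fin n → Fin d) (Fin n → Fin d) ℂ :=
  if h : 1 ≤ i ∧ i < n then
    fun w w' =>
      T (w ⟨i - 1, by omega⟩, w ⟨i, h.2⟩) (w' ⟨i - 1, by omega⟩, w' ⟨i, h.2⟩) *
        ∏ j : Fin n, if (j : ℕ) = i - 1 ∨ (j : ℕ) = i then 1 else (if w j = w' j then 1 else 0)
  else 1

/-- The product `T_1 T_2 ⋯ T_k` on `H^{⊗n}`. -/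
noncomputable def prodT (d n : ℕ) (T : Matrix (Fin d × Fin d) (Fin d × Fin d) ℂ) (k : ℕ) :
    Matrix (Fin n → Fin d) (Fin n → Fin d) ℂ :=
  ((List.range k).map (fun j => Ti d n T (j + 1))).prod

/-- The reversed product `T_k T_{k-1} ⋯ T_1` on `H^{⊗n}`. -/
noncomputable def prodTrev (d n : ℕ) (T : Matrix (Fin d × Fin d) (Fin d × Fin d) ℂ) (k : ℕ) :
    Matrix (Fin n → Fin d) (Fin n → Fin d) ℂ :=
  ((List.range k).map (fun j => Ti d n T (k - j))).prod

/-- `R_n = 1 + T_1 + T_1 T_2 + ⋯ + T_1 T_2 ⋯ T_{n-1}` on `H^{⊗n}`. -/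
noncomputable def Rmat (d n : ℕ) (T : Matrix (Fin d × Fin d) (Fin d × Fin d) ℂ) :
    Matrix (Fin n → Fin d) (Fin n → Fin d) ℂ :=
  ∑ k ∈ Finset.range n, prodT d n T k

/-- `1 ⊗ A` on `H^{⊗(n+1)}`, for `A` an operator on `H^{⊗n}`. -/
noncomputable def oneTensor (d n : ℕ) (A : Matrix (Fin n → Fin d) (Fin n → Fin d) ℂ) :
    Matrix (Fin (n + 1) → Fin d) (Fin (n + 1) → Fin d) ℂ :=
  fun w w' => (if w 0 = w' 0 then 1 else 0) * A (fun j => w j.succ) (fun j => w' j.succ)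

/-- `A ⊗ 1` on `H^{⊗(n+1)}`, for `A` an operator on `H^{⊗n}`. -/
noncomputable def tensorOne (d n : ℕ) (A : Matrix (Fin n → Fin d) (Fin n → Fin d) ℂ) :
    Matrix (Fin (n + 1) → Fin d) (Fin (n + 1) → Fin d) ℂ :=
  fun w w' =>
    A (fun j => w j.castSucc) (fun j => w' j.castSucc) *
      (if w (Fin.last n) = w' (Fin.last n) then 1 else 0)

/-- The operators `P_n` on `H^{⊗n}`: `P_1 = 1`, `P_{n+1} = (1 ⊗ P_n) R_{n+1}`
(so `P_2 = R_2 = 1 + T`). -/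
noncomputable def Pmat (d : ℕ) (T : Matrix (Fin d × Fin d) (Fin d × Fin d) ℂ) :
    (n : ℕ) → Matrix (Fin n → Fin d) (Fin n → Fin d) ℂ
  | 0 => 1
  | n + 1 => oneTensor d n (Pmat d T n) * Rmat d (n + 1) T

/-- `U_n = (T_1 ⋯ T_n)(T_1 ⋯ T_{n-1}) ⋯ (T_1 T_2) T_1` on `H^{⊗m}`. -/
noncomputable def Umat (d m : ℕ) (T : Matrix (Fin d × Fin d) (Fin d × Fin d) ℂ) (n : ℕ) :
    Matrix (Fin m → Fin d) (Fin m → Fin d) ℂ :=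
  ((List.range n).map (fun j => prodT d m T (n - j))).prod

/-- The braid condition `T_1 T_2 T_1 = T_2 T_1 T_2` on `H^{⊗3}`. -/
def Braided (d : ℕ) (T : Matrix (Fin d × Fin d) (Fin d × Fin d) ℂ) : Prop :=
  Ti d 3 T 1 * Ti d 3 T 2 * Ti d 3 T 1 = Ti d 3 T 2 * Ti d 3 T 1 * Ti d 3 T 2

/-- Elementary tensor `X ⊗ Y ∈ H^{⊗(n+m)}`. -/
noncomputable def tensorVec {d n m : ℕ} (X : (Fin n → Fin d) → ℂ) (Y : (Fin m → Fin d) → ℂ) :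
    (Fin (n + m) → Fin d) → ℂ :=
  fun u => X (fun i => u (Fin.castAdd m i)) * Y (fun j => u (Fin.natAdd n j))


section Machinery
open Kronecker

variable {d n m : ℕ}

lemma delta_mul_delta (P Q : Prop) [Decidable P] [Decidable Q] :
    (if P then (1:ℂ) else 0) * (if Q then 1 else 0) = if P ∧ Q then 1 else 0 := by
  split_ifs <;> simp_all

lemma prod_delta {α : Type*} [Fintype α] (C : α → Prop) [DecidablePred C]
    [Decidable (∀ j, C j)] :
    (∏ j : α, if C j then (1:ℂ) else 0) = if ∀ j, C j then 1 else 0 := by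
  by_cases h : ∀ j, C j
  · rw [if_pos h]
    exact Finset.prod_eq_one (fun j _ => if_pos (h j))
  · rw [if_neg h]
    push_neg at h
    obtain ⟨j, hj⟩ := h
    exact Finset.prod_eq_zero (Finset.mem_univ j) (if_neg hj)

open Classical in
/-- Embedding of an operator on `H^{⊗m}` into `H^{⊗n}` along an injection of factors. -/
noncomputable def emb (e : Fin m → Fin n) (A : Matrix (Fin m → Fin d) (Fin m → Fin d) ℂ) :
    Matrix (Fin n → Fin d) (Fin n → Fin d) ℂ :=
  fun w w' => A (w ∘ e) (w' ∘ e) * (if ∀ j, (∀ i, e i ≠ j) → w j = w' j then 1 else 0)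

open Classical in
noncomputable def patch (e : Fin m → Fin n) (w : Fin n → Fin d) (u : Fin m → Fin d) :
    Fin n → Fin d :=
  fun j => if h : ∃ i, e i = j then u h.choose else w j

lemma patch_comp {e : Fin m → Fin n} (he : Function.Injective e) (w : Fin n → Fin d)
    (u : Fin m → Fin d) : (patch e w u) ∘ e = u := by
  classical
  funext i
  have h : ∃ i', e i' = e i := ⟨i, rfl⟩
  simp only [patch, Function.comp_apply, dif_pos h]
  congr 1
  exact he h.choose_spec

lemma patch_off (e : Fin m → Fin n) (w : Fin n → Fin d) (u : Fin m → Fin d) {j : Fin n}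
    (hj : ∀ i, e i ≠ j) : patch e w u j = w j := by
  classical
  simp only [patch]
  rw [dif_neg]
  push_neg
  exact hj

lemma emb_mul {e : Fin m → Fin n} (he : Function.Injective e)
    (A B : Matrix (Fin m → Fin d) (Fin m → Fin d) ℂ) :
    emb e A * emb e B = emb (d := d) e (A * B) := by
  classical
  ext w w''
  simp only [Matrix.mul_apply, emb]
  rw [← Finset.sum_subset (Finset.subset_univ (Finset.univ.image (patch e w)))]
  · rw [Finset.sum_image (fun u _ u' _ h => by
      have := congrArg (· ∘ e) h
      simpa [patch_comp he] using this)]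
    have hterm : ∀ u : Fin m → Fin d,
        (A (w ∘ e) ((patch e w u) ∘ e) *
            (if ∀ j, (∀ i, e i ≠ j) → w j = patch e w u j then 1 else 0)) *
          (B ((patch e w u) ∘ e) (w'' ∘ e) *
            (if ∀ j, (∀ i, e i ≠ j) → patch e w u j = w'' j then 1 else 0)) =
        A (w ∘ e) u * B u (w'' ∘ e) *
          (if ∀ j, (∀ i, e i ≠ j) → w j = w'' j then 1 else 0) := by
      intro u
      rw [patch_comp he]
      rw [if_pos (fun j hj => (patch_off e w u hj).symm)]
      have : (∀ j, (∀ i, e i ≠ j) → patch e w u j = w'' j) ↔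
          (∀ j, (∀ i, e i ≠ j) → w j = w'' j) := by
        constructor
        · intro h j hj; rw [← patch_off e w u hj]; exact h j hj
        · intro h j hj; rw [patch_off e w u hj]; exact h j hj
      rw [if_congr this rfl rfl]
      ring
    rw [Finset.sum_congr rfl (fun u _ => hterm u), ← Finset.sum_mul]
  · intro x _ hx
    have hx' : ¬ ∀ j, (∀ i, e i ≠ j) → w j = x j := by
      intro hc
      apply hx
      rw [Finset.mem_image]
      refine ⟨x ∘ e, Finset.mem_univ _, ?_⟩
      funext j
      by_cases h : ∃ i, e i = j
      · obtain ⟨i, rfl⟩ := h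
        have h' : ∃ i', e i' = e i := ⟨i, rfl⟩
        simp only [patch, dif_pos h', Function.comp_apply]
        rw [he h'.choose_spec]
      · push_neg at h
        rw [patch_off e w _ h, hc j h]
    rw [if_neg hx', mul_zero, zero_mul]

lemma emb_one {e : Fin m → Fin n} :
    emb (d := d) e (1 : Matrix (Fin m → Fin d) (Fin m → Fin d) ℂ) = 1 := by
  classical
  ext w w'
  simp only [emb, Matrix.one_apply]
  rw [delta_mul_delta]
  congr 1
  · simp only [eq_iff_iff]
    constructor
    · rintro ⟨h1, h2⟩
      funext j
      by_cases h : ∃ i, e i = j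
      · obtain ⟨i, rfl⟩ := h
        exact congrFun h1 i
      · push_neg at h
        exact h2 j h
    · rintro rfl
      exact ⟨rfl, fun _ _ => rfl⟩

lemma emb_add {e : Fin m → Fin n} (A B : Matrix (Fin m → Fin d) (Fin m → Fin d) ℂ) :
    emb (d := d) e (A + B) = emb e A + emb e B := by
  ext w w'
  simp only [emb, Matrix.add_apply]
  ring



def E4 : (Fin 4 → Fin d) ≃ ((Fin d × Fin d) × (Fin d × Fin d)) where
  toFun w := ((w 0, w 1), (w 2, w 3))
  invFun p := ![p.1.1, p.1.2, p.2.1, p.2.2]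
  left_inv w := by funext j; fin_cases j <;> rfl
  right_inv p := rfl

lemma E4_apply (w : Fin 4 → Fin d) : E4 w = ((w 0, w 1), (w 2, w 3)) := rfl

lemma Ti_four_one (T : Matrix (Fin d × Fin d) (Fin d × Fin d) ℂ) :
    Ti d 4 T 1 = Matrix.reindex E4.symm E4.symm (T ⊗ₖ (1 : Matrix (Fin d × Fin d) (Fin d × Fin d) ℂ)) := by
  ext w w'
  simp only [Ti, dif_pos (by omega : 1 ≤ 1 ∧ 1 < 4)]
  simp only [Matrix.reindex_apply, Equiv.symm_symm, Matrix.submatrix_apply,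
    Matrix.kroneckerMap_apply, E4_apply, Equiv.coe_fn_mk, Matrix.one_apply, Fin.prod_univ_four]
  simp only [show ((0:Fin 4):ℕ) = 0 from rfl, show ((1:Fin 4):ℕ) = 1 from rfl,
    show ((2:Fin 4):ℕ) = 2 from rfl, show ((3:Fin 4):ℕ) = 3 from rfl]
  norm_num [Prod.ext_iff]
  by_cases h0 : w 0 = w' 0 <;> by_cases h1 : w 1 = w' 1 <;> by_cases h2 : w 2 = w' 2 <;>
    by_cases h3 : w 3 = w' 3 <;> simp_all

lemma Ti_four_three (T : Matrix (Fin d × Fin d) (Fin d × Fin d) ℂ) :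
    Ti d 4 T 3 = Matrix.reindex E4.symm E4.symm ((1 : Matrix (Fin d × Fin d) (Fin d × Fin d) ℂ) ⊗ₖ T) := by
  ext w w'
  simp only [Ti, dif_pos (by omega : 1 ≤ 3 ∧ 3 < 4)]
  simp only [Matrix.reindex_apply, Equiv.symm_symm, Matrix.submatrix_apply,
    Matrix.kroneckerMap_apply, E4_apply, Equiv.coe_fn_mk, Matrix.one_apply, Fin.prod_univ_four]
  simp only [show ((0:Fin 4):ℕ) = 0 from rfl, show ((1:Fin 4):ℕ) = 1 from rfl,
    show ((2:Fin 4):ℕ) = 2 from rfl, show ((3:Fin 4):ℕ) = 3 from rfl]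
  norm_num [Prod.ext_iff]
  by_cases h0 : w 0 = w' 0 <;> by_cases h1 : w 1 = w' 1 <;> by_cases h2 : w 2 = w' 2 <;>
    by_cases h3 : w 3 = w' 3 <;> simp_all

lemma Ti_four_comm (T : Matrix (Fin d × Fin d) (Fin d × Fin d) ℂ) :
    Ti d 4 T 1 * Ti d 4 T 3 = Ti d 4 T 3 * Ti d 4 T 1 := by
  rw [Ti_four_one, Ti_four_three, ← Matrix.reindexAlgEquiv_apply ℂ ℂ,
    ← Matrix.reindexAlgEquiv_apply ℂ ℂ, ← map_mul, ← map_mul,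
    ← Matrix.mul_kronecker_mul, ← Matrix.mul_kronecker_mul]
  simp



lemma ite_ite_or (P Q : Prop) [Decidable P] [Decidable Q] :
    (if P then (1:ℂ) else if Q then 1 else 0) = if P ∨ Q then 1 else 0 := by
  split_ifs <;> tauto

open Classical in
set_option maxHeartbeats 2000000 in
lemma emb_Ti {n' m' : ℕ} {e : Fin m' → Fin n'} (he : Function.Injective e)
    (T : Matrix (Fin d × Fin d) (Fin d × Fin d) ℂ) {a i : ℕ}
    (ha1 : 1 ≤ a) (ham : a < m') (hi1 : 1 ≤ i) (hin : i < n')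
    (h1 : (e ⟨a - 1, by omega⟩ : ℕ) = i - 1) (h2 : (e ⟨a, ham⟩ : ℕ) = i) :
    emb e (Ti d m' T a) = Ti d n' T i := by
  have hTa : Ti d m' T a = fun w w' =>
      T (w ⟨a - 1, by omega⟩, w ⟨a, ham⟩) (w' ⟨a - 1, by omega⟩, w' ⟨a, ham⟩) *
        ∏ j : Fin m', if (j : ℕ) = a - 1 ∨ (j : ℕ) = a then 1
          else (if w j = w' j then 1 else 0) := dif_pos ⟨ha1, ham⟩
  have hTi : Ti d n' T i = fun w w' =>
      T (w ⟨i - 1, by omega⟩, w ⟨i, hin⟩) (w' ⟨i - 1, by omega⟩, w' ⟨i, hin⟩) *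
        ∏ j : Fin n', if (j : ℕ) = i - 1 ∨ (j : ℕ) = i then 1
          else (if w j = w' j then 1 else 0) := dif_pos ⟨hi1, hin⟩
  ext w w'
  simp only [emb, hTa, hTi, Function.comp_apply]
  have hea : e ⟨a - 1, by omega⟩ = ⟨i - 1, by omega⟩ := Fin.ext h1
  have heb : e ⟨a, ham⟩ = ⟨i, hin⟩ := Fin.ext h2
  have hprod : ∀ (v v' : Fin n' → Fin d),
      (∏ j : Fin m', if (j : ℕ) = a - 1 ∨ (j : ℕ) = a then (1:ℂ)
          else (if v (e j) = v' (e j) then 1 else 0)) *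
        (if ∀ j, (∀ i', e i' ≠ j) → v j = v' j then 1 else 0) =
      ∏ j : Fin n', if (j : ℕ) = i - 1 ∨ (j : ℕ) = i then 1
          else (if v j = v' j then 1 else 0) := by
    intro v v'
    have l1 : ∀ j : Fin m', (if (j : ℕ) = a - 1 ∨ (j : ℕ) = a then (1:ℂ)
        else (if v (e j) = v' (e j) then 1 else 0)) =
        if ((j : ℕ) = a - 1 ∨ (j : ℕ) = a) ∨ v (e j) = v' (e j) then 1 else 0 :=
      fun j => ite_ite_or _ _
    have l2 : ∀ j : Fin n', (if (j : ℕ) = i - 1 ∨ (j : ℕ) = i then (1:ℂ)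
        else (if v j = v' j then 1 else 0)) =
        if ((j : ℕ) = i - 1 ∨ (j : ℕ) = i) ∨ v j = v' j then 1 else 0 :=
      fun j => ite_ite_or _ _
    simp only [l1, l2, prod_delta, delta_mul_delta]
    have hiff : ((∀ j : Fin m', ((j : ℕ) = a - 1 ∨ (j : ℕ) = a) ∨ v (e j) = v' (e j)) ∧
        ∀ j : Fin n', (∀ i', e i' ≠ j) → v j = v' j) ↔
        ∀ j : Fin n', ((j : ℕ) = i - 1 ∨ (j : ℕ) = i) ∨ v j = v' j := by
      constructor
      · rintro ⟨hA, hB⟩ j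
        by_cases hr : ∃ i', e i' = j
        · obtain ⟨i', rfl⟩ := hr
          rcases hA i' with (h | h) | h
          · have hi' : i' = ⟨a - 1, by omega⟩ := Fin.ext h
            left; left; rw [hi', h1]
          · have hi' : i' = ⟨a, ham⟩ := Fin.ext h
            left; right; rw [hi', h2]
          · right; exact h
        · push_neg at hr
          right; exact hB j hr
      · intro hC
        constructor
        · intro j
          rcases hC (e j) with (h | h) | h
          · have : e j = e ⟨a - 1, by omega⟩ := Fin.ext (by rw [h, h1])
            left; left; rw [he this]
          · have : e j = e ⟨a, ham⟩ := Fin.ext (by rw [h, h2])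
            left; right; rw [he this]
          · right; exact h
        · intro j hj
          rcases hC j with (h | h) | h
          · exact absurd (Fin.ext (by rw [h1, h]) : e ⟨a - 1, by omega⟩ = j) (hj _)
          · exact absurd (Fin.ext (by rw [h2, h]) : e ⟨a, ham⟩ = j) (hj _)
          · exact h
    exact if_congr hiff rfl rfl
  rw [mul_assoc, hprod w w', congrArg w hea, congrArg w heb, congrArg w' hea, congrArg w' heb]

def quadEmb (n' i j : ℕ) (h0 : i - 1 < n') (h1 : i < n') (h2 : j - 1 < n') (h3 : j < n') :
    Fin 4 → Fin n' :=
  fun a => ⟨(![i - 1, i, j - 1, j] : Fin 4 → ℕ) a, by fin_cases a <;> assumption⟩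

set_option maxRecDepth 4000 in
lemma quadEmb_inj {n' i j : ℕ} (hi : 1 ≤ i) (hij : i + 2 ≤ j) (h0 : i - 1 < n') (h1 : i < n')
    (h2 : j - 1 < n') (h3 : j < n') : Function.Injective (quadEmb n' i j h0 h1 h2 h3) := by
  have hm : StrictMono (quadEmb n' i j h0 h1 h2 h3) := by
    rw [Fin.strictMono_iff_lt_succ]
    intro a
    fin_cases a
    · exact show i - 1 < i by omega
    · exact show i < j - 1 by omega
    · exact show j - 1 < j by omega
  exact hm.injective

def triEmb (n' i : ℕ) (hi : 1 ≤ i) (h : i + 1 < n') : Fin 3 → Fin n' :=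
  fun a => ⟨i - 1 + a, by omega⟩

lemma triEmb_inj {n' i : ℕ} (hi : 1 ≤ i) (h : i + 1 < n') :
    Function.Injective (triEmb n' i hi h) := by
  intro a b hab
  have hab' : i - 1 + (a : ℕ) = i - 1 + (b : ℕ) := congrArg Fin.val hab
  exact Fin.ext (by omega)

lemma Ti_eq_one {n' : ℕ} (T : Matrix (Fin d × Fin d) (Fin d × Fin d) ℂ) {i : ℕ}
    (h : ¬(1 ≤ i ∧ i < n')) : Ti d n' T i = 1 := dif_neg h

lemma Ti_comm {n' : ℕ} (T : Matrix (Fin d × Fin d) (Fin d × Fin d) ℂ) {i j : ℕ}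
    (hi : 1 ≤ i) (hij : i + 2 ≤ j) :
    Ti d n' T i * Ti d n' T j = Ti d n' T j * Ti d n' T i := by
  by_cases hj : j < n'
  · have hin : i < n' := by omega
    have hb0 : i - 1 < n' := by omega
    have hb1 : i < n' := by omega
    have hb2 : j - 1 < n' := by omega
    have hb3 : j < n' := by omega
    have he : Function.Injective (quadEmb n' i j hb0 hb1 hb2 hb3) :=
      quadEmb_inj hi hij hb0 hb1 hb2 hb3
    have c14 : (1:ℕ) < 4 := by norm_num
    have c34 : (3:ℕ) < 4 := by norm_num
    have c11 : (1:ℕ) ≤ 1 := le_refl 1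
    have c13 : (1:ℕ) ≤ 3 := by norm_num
    have hj1 : 1 ≤ j := by omega
    have h1 : Ti d n' T i = emb (quadEmb n' i j hb0 hb1 hb2 hb3) (Ti d 4 T 1) :=
      (emb_Ti (a := 1) he T c11 c14 hi hin rfl rfl).symm
    have h3 : Ti d n' T j = emb (quadEmb n' i j hb0 hb1 hb2 hb3) (Ti d 4 T 3) :=
      (emb_Ti (a := 3) he T c13 c34 hj1 hj rfl rfl).symm
    rw [h1, h3, emb_mul he, emb_mul he, Ti_four_comm]
  · rw [Ti_eq_one T (show ¬(1 ≤ j ∧ j < n') by omega), one_mul, mul_one]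

lemma Ti_braid {n' : ℕ} {T : Matrix (Fin d × Fin d) (Fin d × Fin d) ℂ}
    (hb : Ti d 3 T 1 * Ti d 3 T 2 * Ti d 3 T 1 = Ti d 3 T 2 * Ti d 3 T 1 * Ti d 3 T 2)
    {i : ℕ} (hi : 1 ≤ i) (hin : i + 1 < n') :
    Ti d n' T i * Ti d n' T (i + 1) * Ti d n' T i =
      Ti d n' T (i + 1) * Ti d n' T i * Ti d n' T (i + 1) := by
  have he : Function.Injective (triEmb n' i hi hin) := triEmb_inj hi hin
  have c13 : (1:ℕ) < 3 := by norm_num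
  have c23 : (2:ℕ) < 3 := by norm_num
  have c11 : (1:ℕ) ≤ 1 := le_refl 1
  have c12 : (1:ℕ) ≤ 2 := by norm_num
  have hin' : i < n' := by omega
  have hi1 : 1 ≤ i + 1 := by omega
  have hi1n : i + 1 < n' := hin
  have e10 : (triEmb n' i hi hin ⟨1 - 1, c13.trans_le' (by omega)⟩ : ℕ) = i - 1 := rfl
  have e11 : (triEmb n' i hi hin ⟨1, c13⟩ : ℕ) = i := by
    show i - 1 + 1 = i; omega
  have e21 : (triEmb n' i hi hin ⟨2 - 1, by omega⟩ : ℕ) = i + 1 - 1 := by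
    show i - 1 + 1 = i + 1 - 1; omega
  have e22 : (triEmb n' i hi hin ⟨2, c23⟩ : ℕ) = i + 1 := by
    show i - 1 + 2 = i + 1; omega
  have h1 : Ti d n' T i = emb (triEmb n' i hi hin) (Ti d 3 T 1) :=
    (emb_Ti (a := 1) he T c11 c13 hi hin' e10 e11).symm
  have h2 : Ti d n' T (i + 1) = emb (triEmb n' i hi hin) (Ti d 3 T 2) :=
    (emb_Ti (a := 2) he T c12 c23 hi1 hi1n e21 e22).symm
  rw [h1, h2, emb_mul he, emb_mul he, hb, ← emb_mul he, ← emb_mul he]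


lemma prodT_zero {m : ℕ} (T : Matrix (Fin d × Fin d) (Fin d × Fin d) ℂ) :
    prodT d m T 0 = 1 := rfl

lemma prodT_succ {m : ℕ} (T : Matrix (Fin d × Fin d) (Fin d × Fin d) ℂ) (k : ℕ) :
    prodT d m T (k + 1) = prodT d m T k * Ti d m T (k + 1) := by
  simp [prodT, List.range_succ]

lemma prodT_comm_Ti {m : ℕ} (T : Matrix (Fin d × Fin d) (Fin d × Fin d) ℂ) {r k : ℕ}
    (hrk : r + 2 ≤ k) :
    prodT d m T r * Ti d m T k = Ti d m T k * prodT d m T r := by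
  induction r with
  | zero => rw [prodT_zero, one_mul, mul_one]
  | succ r ih =>
      rw [prodT_succ, mul_assoc, Ti_comm T (by omega) (by omega : (r + 1) + 2 ≤ k),
        ← mul_assoc, ih (by omega), mul_assoc]

lemma prodT_mul_Ti {m : ℕ} {T : Matrix (Fin d × Fin d) (Fin d × Fin d) ℂ}
    (hb : Ti d 3 T 1 * Ti d 3 T 2 * Ti d 3 T 1 = Ti d 3 T 2 * Ti d 3 T 1 * Ti d 3 T 2)
    {j r : ℕ} (hj : 1 ≤ j) (hjr : j + 1 ≤ r) (hrm : r < m) :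
    prodT d m T r * Ti d m T j = Ti d m T (j + 1) * prodT d m T r := by
  induction r, hjr using Nat.le_induction with
  | base =>
      have e0 : prodT d m T j = prodT d m T (j - 1) * Ti d m T j := by
        conv_lhs => rw [show j = (j - 1) + 1 by omega]
        rw [prodT_succ, show (j - 1) + 1 = j by omega]
      have hb' := Ti_braid hb hj (show j + 1 < m by omega)
      calc prodT d m T (j + 1) * Ti d m T j
          = prodT d m T (j - 1) * (Ti d m T j * Ti d m T (j + 1) * Ti d m T j) := by
            rw [prodT_succ, e0]; noncomm_ring
        _ = prodT d m T (j - 1) * (Ti d m T (j + 1) * Ti d m T j * Ti d m T (j + 1)) := by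
            rw [hb']
        _ = prodT d m T (j - 1) * Ti d m T (j + 1) *
              (Ti d m T j * Ti d m T (j + 1)) := by noncomm_ring
        _ = Ti d m T (j + 1) * prodT d m T (j - 1) *
              (Ti d m T j * Ti d m T (j + 1)) := by
            rw [prodT_comm_Ti T (show (j - 1) + 2 ≤ j + 1 by omega)]
        _ = Ti d m T (j + 1) * prodT d m T (j + 1) := by
            rw [prodT_succ, e0]; noncomm_ring
  | succ r hr ih =>
      rw [prodT_succ, mul_assoc, ← Ti_comm T hj (by omega : j + 2 ≤ r + 1), ← mul_assoc,
        ih (by omega), mul_assoc, ← prodT_succ]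

lemma oneTensor_eq_emb {n : ℕ} (A : Matrix (Fin n → Fin d) (Fin n → Fin d) ℂ) :
    oneTensor d n A = emb Fin.succ A := by
  classical
  ext w w'
  simp only [oneTensor, emb, Function.comp_def]
  have hiff : (∀ j, (∀ i : Fin n, Fin.succ i ≠ j) → w j = w' j) ↔ w 0 = w' 0 := by
    constructor
    · intro h
      exact h 0 (fun i => Fin.succ_ne_zero i)
    · intro h j hj
      cases j using Fin.cases with
      | zero => exact h
      | succ i => exact absurd rfl (hj i)
  rw [if_congr hiff rfl rfl, mul_comm]

lemma oneTensor_mul {n : ℕ} (A B : Matrix (Fin n → Fin d) (Fin n → Fin d) ℂ) :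
    oneTensor d n (A * B) = oneTensor d n A * oneTensor d n B := by
  rw [oneTensor_eq_emb, oneTensor_eq_emb, oneTensor_eq_emb,
    emb_mul (Fin.succ_injective n)]

lemma oneTensor_add {n : ℕ} (A B : Matrix (Fin n → Fin d) (Fin n → Fin d) ℂ) :
    oneTensor d n (A + B) = oneTensor d n A + oneTensor d n B := by
  rw [oneTensor_eq_emb, oneTensor_eq_emb, oneTensor_eq_emb, emb_add]

lemma oneTensor_one {n : ℕ} :
    oneTensor d n (1 : Matrix (Fin n → Fin d) (Fin n → Fin d) ℂ) = 1 := by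
  rw [oneTensor_eq_emb, emb_one]

lemma oneTensor_Ti {n : ℕ} (T : Matrix (Fin d × Fin d) (Fin d × Fin d) ℂ) {i : ℕ}
    (hi : 1 ≤ i) :
    oneTensor d n (Ti d n T i) = Ti d (n + 1) T (i + 1) := by
  by_cases h : i < n
  · rw [oneTensor_eq_emb]
    have hi1' : 1 ≤ i + 1 := by omega
    have hin' : i + 1 < n + 1 := by omega
    have hA : ((Fin.succ ⟨i - 1, show i - 1 < n by omega⟩ : Fin (n + 1)) : ℕ) = i + 1 - 1 := by
      simp only [Fin.val_succ]; omega
    have hB : ((Fin.succ ⟨i, h⟩ : Fin (n + 1)) : ℕ) = i + 1 := by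
      simp only [Fin.val_succ]
    exact emb_Ti (e := Fin.succ) (Fin.succ_injective n) T (a := i) (i := i + 1)
      hi h hi1' hin' hA hB
  · rw [Ti_eq_one T (show ¬(1 ≤ i ∧ i < n) by omega), oneTensor_one,
      Ti_eq_one T (show ¬(1 ≤ i + 1 ∧ i + 1 < n + 1) by omega)]

lemma sum_factor {J : Type*} [Fintype J] [DecidableEq J]
    {s : Finset ℕ} {f : ℕ → Matrix J J ℂ} {M : Matrix J J ℂ}
    (h : ∀ j ∈ s, ∃ Q : Matrix J J ℂ, f j = Q * M) :
    ∃ Q : Matrix J J ℂ, ∑ j ∈ s, f j = Q * M := by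
  classical
  induction s using Finset.induction with
  | empty => exact ⟨0, by simp⟩
  | @insert a s ha ih =>
      obtain ⟨Q1, hQ1⟩ := h a (Finset.mem_insert_self a s)
      obtain ⟨Q2, hQ2⟩ := ih (fun j hj => h j (Finset.mem_insert_of_mem hj))
      exact ⟨Q1 + Q2, by rw [Finset.sum_insert ha, hQ1, hQ2, add_mul]⟩

lemma P_factor (T : Matrix (Fin d × Fin d) (Fin d × Fin d) ℂ) (hbraid : Braided d T) :
    ∀ n k : ℕ, 1 ≤ k → k ≤ n →
      ∃ Q : Matrix (Fin (n + 1) → Fin d) (Fin (n + 1) → Fin d) ℂ,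
        Pmat d T (n + 1) = Q * (1 + Ti d (n + 1) T k) := by
  intro n
  induction n with
  | zero => intro k h1 h2; omega
  | succ n ih =>
      intro k hk1 hk2
      obtain ⟨k', rfl⟩ : ∃ k', k = k' + 1 := ⟨k - 1, by omega⟩
      show ∃ Q : Matrix (Fin (n + 2) → Fin d) (Fin (n + 2) → Fin d) ℂ,
        Pmat d T (n + 2) = Q * (1 + Ti d (n + 2) T (k' + 1))
      have hOP : ∀ jj : ℕ, 2 ≤ jj → jj ≤ n + 1 →
          ∃ Q : Matrix (Fin (n + 2) → Fin d) (Fin (n + 2) → Fin d) ℂ,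
            oneTensor d (n + 1) (Pmat d T (n + 1)) = Q * (1 + Ti d (n + 2) T jj) := by
        intro jj h2 h3
        obtain ⟨Q, hQ⟩ := ih (jj - 1) (by omega) (by omega)
        refine ⟨oneTensor d (n + 1) Q, ?_⟩
        have hshift : oneTensor d (n + 1) (Ti d (n + 1) T (jj - 1)) = Ti d (n + 2) T jj := by
          rw [oneTensor_Ti T (by omega : 1 ≤ jj - 1), show jj - 1 + 1 = jj by omega]
        rw [hQ, oneTensor_mul, oneTensor_add, oneTensor_one, hshift]
      have hPdef : Pmat d T (n + 2) =
          oneTensor d (n + 1) (Pmat d T (n + 1)) * Rmat d (n + 2) T := rfl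
      set OP := oneTensor d (n + 1) (Pmat d T (n + 1)) with hOPdef
      rw [hPdef, Rmat, Finset.mul_sum]
      classical
      set g : ℕ → Matrix (Fin (n + 2) → Fin d) (Fin (n + 2) → Fin d) ℂ := fun j =>
        if j = k' then OP * (prodT d (n + 2) T k' + prodT d (n + 2) T (k' + 1))
        else if j = k' + 1 then 0 else OP * prodT d (n + 2) T j with hg
      have hmem1 : k' ∈ Finset.range (n + 2) := by
        simp only [Finset.mem_range]; omega
      have hmem2 : k' + 1 ∈ (Finset.range (n + 2)).erase k' := by
        simp only [Finset.mem_erase, Finset.mem_range]; omega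
      have hsum : ∑ j ∈ Finset.range (n + 2), OP * prodT d (n + 2) T j =
          ∑ j ∈ Finset.range (n + 2), g j := by
        rw [← Finset.add_sum_erase _ _ hmem1, ← Finset.add_sum_erase _ _ hmem2,
          ← Finset.add_sum_erase _ g hmem1, ← Finset.add_sum_erase _ g hmem2]
        have hg1 : g k' = OP * prodT d (n + 2) T k' + OP * prodT d (n + 2) T (k' + 1) := by
          simp [hg, mul_add]
        have hg2 : g (k' + 1) = 0 := by
          simp [hg]
        have hrest : ∑ j ∈ ((Finset.range (n + 2)).erase k').erase (k' + 1), g j =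
            ∑ j ∈ ((Finset.range (n + 2)).erase k').erase (k' + 1),
              OP * prodT d (n + 2) T j := by
          refine Finset.sum_congr rfl (fun j hj => ?_)
          simp only [Finset.mem_erase] at hj
          rw [hg]
          simp only [if_neg hj.2.1, if_neg hj.1]
        rw [hg1, hg2, hrest]
        abel
      rw [hsum]
      apply sum_factor
      intro j hj
      simp only [Finset.mem_range] at hj
      by_cases hj1 : j = k'
      · have hgj : g j = OP * (prodT d (n + 2) T k' + prodT d (n + 2) T (k' + 1)) := by
          simp [hg, hj1]
        refine ⟨OP * prodT d (n + 2) T k', ?_⟩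
        rw [hgj, prodT_succ]
        noncomm_ring
      · by_cases hj2 : j = k' + 1
        · refine ⟨0, ?_⟩
          have hgj : g j = 0 := by simp [hg, hj2, hj1]
          rw [hgj, zero_mul]
        · have hgj : g j = OP * prodT d (n + 2) T j := by
            rw [hg]; simp only [if_neg hj1, if_neg hj2]
          by_cases hlt : j < k'
          · obtain ⟨Q', hQ'⟩ := hOP (k' + 1) (by omega) (by omega)
            have hcomm := prodT_comm_Ti (m := n + 2) T (show j + 2 ≤ k' + 1 by omega)
            refine ⟨Q' * prodT d (n + 2) T j, ?_⟩
            rw [hgj, hQ', mul_assoc, add_mul, one_mul, ← hcomm]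
            noncomm_ring
          · have hjge : k' + 2 ≤ j := by omega
            obtain ⟨Q'', hQ''⟩ := hOP (k' + 2) (by omega) (by omega)
            have hmul := prodT_mul_Ti (m := n + 2) hbraid
              (show 1 ≤ k' + 1 by omega) (show (k' + 1) + 1 ≤ j by omega) (show j < n + 2 by omega)
            refine ⟨Q'' * prodT d (n + 2) T j, ?_⟩
            rw [hgj, hQ'', mul_assoc, add_mul, one_mul, ← hmul]
            noncomm_ring

end Machinery

/-- Let `T` be a self-adjoint contraction on `H ⊗ H` satisfying the braid relation on
`H^{⊗3}`, with `P_2 = 1 + T`, `R_n = 1 + T_1 + T_1T_2 + ⋯ + T_1⋯T_{n-1}`,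
`P_{n+1} = (1 ⊗ P_n) R_{n+1}`.  Then for each `k = 1, ..., n`,
`ker(1 + T_k) ⊆ ker P_{n+1}`, where `T_k` acts as `T` on the `k`-th and `(k+1)`-st
tensor factors of `H^{⊗(n+1)}`. -/
theorem ker_one_add_Tk_le_ker_P (d n : ℕ) (T : Matrix (Fin d × Fin d) (Fin d × Fin d) ℂ)
    (hsa : T.IsHermitian) (hcontr : ‖Matrix.toEuclideanCLM (𝕜 := ℂ) T‖ ≤ 1)
    (hbraid : Braided d T) (k : ℕ) (hk1 : 1 ≤ k) (hk2 : k ≤ n) :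
    LinearMap.ker (1 + Ti d (n + 1) T k).mulVecLin ≤
      LinearMap.ker (Pmat d T (n + 1)).mulVecLin := by
  intro v hv
  obtain ⟨Q, hQ⟩ := P_factor T hbraid n k hk1 hk2
  simp only [LinearMap.mem_ker, Matrix.mulVecLin_apply] at hv ⊢
  rw [hQ, ← Matrix.mulVec_mulVec, hv, Matrix.mulVec_zero]

end Wick
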